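/- Let Y be a random variable taking values in a finite set of size at least K. Then Y is within statistical distance ε of some random variable with min-entropy at least log K if and only if the (1/K)-excess of Y is at most ε. -/

import Mathlib

/-- Helper: if the positive part of `p - q` sums to at most `e` and `p, q` have
equal total sums, then every partial-sum difference is at most `e` in absolute value. -/
lemma stmt_5_dist_bound {Y : Type*} [Fintype Y] (p q : Y → ℝ)
    (hsum : ∑ y, p y = ∑ y, q y) (e : ℝ)
    (h : ∑ y, max 0 (p y - q y) ≤ e) (T : Finset Y) :
    |∑ y ∈ T, p y - ∑ y ∈ T, q y| ≤ e := by
  have key : ∀ (f g : Y → ℝ), (∑ y, max 0 (f y - g y) ≤ e) → ∀ S : Finset Y,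
      ∑ y ∈ S, f y - ∑ y ∈ S, g y ≤ e := by
    intro f g hfg S
    rw [← Finset.sum_sub_distrib]
    calc ∑ y ∈ S, (f y - g y) ≤ ∑ y ∈ S, max 0 (f y - g y) :=
          Finset.sum_le_sum (fun y _ => le_max_right _ _)
      _ ≤ ∑ y, max 0 (f y - g y) := by
          apply Finset.sum_le_sum_of_subset_of_nonneg (Finset.subset_univ S)
          intro y _ _; exact le_max_left _ _
      _ ≤ e := hfg
  have hneg : ∑ y, max 0 (q y - p y) ≤ e := by
    have hpt : ∀ y, max 0 (q y - p y) = max 0 (p y - q y) - (p y - q y) := by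
      intro y
      rcases le_total (p y) (q y) with hle | hle
      · rw [max_eq_right (by linarith), max_eq_left (by linarith)]; ring
      · rw [max_eq_left (by linarith), max_eq_right (by linarith)]; ring
    calc ∑ y, max 0 (q y - p y) = ∑ y, (max 0 (p y - q y) - (p y - q y)) := by
          exact Finset.sum_congr rfl (fun y _ => hpt y)
      _ = ∑ y, max 0 (p y - q y) - (∑ y, p y - ∑ y, q y) := by
          rw [Finset.sum_sub_distrib, Finset.sum_sub_distrib]
      _ = ∑ y, max 0 (p y - q y) := by rw [hsum]; ring
      _ ≤ e := h
  rw [abs_le]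
  constructor
  · have := key q p hneg T; linarith
  · exact key p q h T

theorem stmt_5 {Y : Type*} [Fintype Y]
    (p : Y → ℝ) (hp : ∀ y, 0 ≤ p y) (hsum : ∑ y, p y = 1)
    (K : ℕ) (hK : 0 < K) (hcard : K ≤ Fintype.card Y) (ε : ℝ) (hε : 0 ≤ ε) :
    (∃ q : Y → ℝ, (∀ y, 0 ≤ q y) ∧ ∑ y, q y = 1 ∧ (∀ y, q y ≤ 1 / K) ∧
        ∀ T : Finset Y, |∑ y ∈ T, p y - ∑ y ∈ T, q y| ≤ ε) ↔
      ∑ y, max 0 (p y - 1 / K) ≤ ε := by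
  set c : ℝ := 1 / K with hc
  have hc0 : 0 < c := by positivity
  have hmaxmin : ∀ y, max 0 (p y - c) = p y - min (p y) c := by
    intro y
    rcases le_total (p y) c with hle | hle
    · rw [max_eq_left (by linarith), min_eq_left hle]; ring
    · rw [max_eq_right (by linarith), min_eq_right hle]
  constructor
  · rintro ⟨q, hq0, hqsum, hqc, hdist⟩
    set T := Finset.univ.filter (fun y => c < p y) with hT
    have h1 : ∑ y, max 0 (p y - c) = ∑ y ∈ T, (p y - c) := by
      rw [Finset.sum_filter]
      apply Finset.sum_congr rfl
      intro y _
      rcases le_or_gt (p y) c with hle | hlt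
      · rw [if_neg (not_lt.mpr hle), max_eq_left (by linarith)]
      · rw [if_pos hlt, max_eq_right (by linarith)]
    rw [h1]
    have h2 : ∑ y ∈ T, (p y - c) ≤ ∑ y ∈ T, p y - ∑ y ∈ T, q y := by
      rw [← Finset.sum_sub_distrib]
      exact Finset.sum_le_sum (fun y _ => by have := hqc y; linarith)
    calc ∑ y ∈ T, (p y - c) ≤ ∑ y ∈ T, p y - ∑ y ∈ T, q y := h2
      _ ≤ |∑ y ∈ T, p y - ∑ y ∈ T, q y| := le_abs_self _
      _ ≤ ε := hdist T
  · intro he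
    set e : ℝ := ∑ y, max 0 (p y - c) with hedef
    have he0 : 0 ≤ e := Finset.sum_nonneg (fun y _ => le_max_left _ _)
    have hminsum : ∑ y, min (p y) c = 1 - e := by
      have : ∑ y, min (p y) c = ∑ y, (p y - max 0 (p y - c)) := by
        apply Finset.sum_congr rfl
        intro y _; rw [hmaxmin y]; ring
      rw [this, Finset.sum_sub_distrib, hsum, ← hedef]
    rcases eq_or_lt_of_le he0 with heq | hpos
    · -- e = 0 : take q = p
      refine ⟨p, hp, hsum, ?_, ?_⟩
      · intro y
        have hz : max 0 (p y - c) = 0 := by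
          have := (Finset.sum_eq_zero_iff_of_nonneg
            (fun y _ => le_max_left (0:ℝ) (p y - c))).mp heq.symm y (Finset.mem_univ y)
          exact this
        by_contra hcon
        push_neg at hcon
        have : (0:ℝ) < max 0 (p y - c) := lt_of_lt_of_le (by linarith) (le_max_right _ _)
        linarith
      · intro T; simp [hε]
    · -- e > 0
      set S : ℝ := ∑ y, (c - min (p y) c) with hSdef
      have hScomp : S = (Fintype.card Y : ℝ) * c - (1 - e) := by
        rw [hSdef, Finset.sum_sub_distrib, hminsum, Finset.sum_const, Finset.card_univ,
          nsmul_eq_mul]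
      have hcardc : (1:ℝ) ≤ (Fintype.card Y : ℝ) * c := by
        have hKc : (K : ℝ) * c = 1 := by
          rw [hc]; field_simp
        have : (K : ℝ) ≤ (Fintype.card Y : ℝ) := by exact_mod_cast hcard
        nlinarith
      have heS : e ≤ S := by rw [hScomp]; linarith
      have hS0 : 0 < S := lt_of_lt_of_le hpos heS
      have ht1 : e / S ≤ 1 := (div_le_one hS0).mpr heS
      have ht0 : 0 ≤ e / S := div_nonneg he0 hS0.le
      refine ⟨fun y => min (p y) c + (e / S) * (c - min (p y) c), ?_, ?_, ?_, ?_⟩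
      · intro y
        have h1 : 0 ≤ min (p y) c := le_min (hp y) hc0.le
        have h2 : 0 ≤ c - min (p y) c := by simp [min_le_right]
        positivity
      · rw [Finset.sum_add_distrib, hminsum, ← Finset.mul_sum, ← hSdef]
        field_simp; ring
      · intro y
        simp only
        have h2 : 0 ≤ c - min (p y) c := by simp [min_le_right]
        nlinarith
      · intro T
        apply stmt_5_dist_bound
        · rw [hsum, Finset.sum_add_distrib, hminsum, ← Finset.mul_sum, ← hSdef]
          field_simp; ring
        · calc ∑ y, max 0 (p y - (min (p y) c + (e / S) * (c - min (p y) c)))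
              ≤ ∑ y, max 0 (p y - c) := by
                apply Finset.sum_le_sum
                intro y _
                apply max_le (le_max_left _ _)
                have h2 : 0 ≤ c - min (p y) c := by simp [min_le_right]
                rw [hmaxmin y]
                nlinarith
            _ ≤ ε := he
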